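/- arXiv:1111.3931 — 3 statements merged into one kernel-verified Lean document; each statement's English description precedes it below -/
import Mathlib

section
/- (Proposition 4.) Let n ≥ 2, let ℤ^{n−1} = ℤe₁ + ⋯ + ℤe_{n−1} be the (n−1)-dimensional lattice in ℝⁿ, and let q₀(x) = x/‖x‖ⁿ. Then the series q₀(x) + ∑_{m ∈ ℤ^{n−1} \ {0}} (q₀(x + m) − q₀(m)) converges normally on ℝⁿ \ ℤ^{n−1}; in particular, for every compact set K ⊆ ℝⁿ \ ℤ^{n−1} one has ∑_{m ∈ ℤ^{n−1} \ {0}} sup_{x ∈ K} ‖q₀(x+m) − q₀(m)‖ < ∞. -/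
noncomputable section

open scoped BigOperators

/-- The Cauchy kernel `q₀(x) = x / ‖x‖ⁿ` on `ℝⁿ`. -/
def q0 (n : ℕ) (x : EuclideanSpace ℝ (Fin n)) : EuclideanSpace ℝ (Fin n) :=
  (‖x‖ ^ n)⁻¹ • x

/-- The point `m₁e₁ + ⋯ + m_p e_p` of the lattice `ℤ^p ⊆ ℝⁿ`. -/
def latticeVec (n p : ℕ) (hp : p ≤ n) (m : Fin p → ℤ) : EuclideanSpace ℝ (Fin n) :=
  ∑ i : Fin p, (m i : ℝ) • EuclideanSpace.single (Fin.castLE hp i) 1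

open Finset

lemma my_pow_sub_pow_le (k : ℕ) {a b : ℝ} (hb : 0 ≤ b) (hba : b ≤ a) :
    a ^ (k+1) - b ^ (k+1) ≤ (k+1) * (a - b) * a ^ k := by
  induction k with
  | zero => norm_num
  | succ k ih =>
    have ha : 0 ≤ a := hb.trans hba
    have h2 : b * (a ^ (k+1) - b ^ (k+1)) ≤ a * ((k+1) * (a - b) * a ^ k) :=
      mul_le_mul hba ih (by nlinarith [pow_le_pow_left₀ hb hba (k+1)]) ha
    have h3 : a ^ (k+1+1) - b ^ (k+1+1) = (a-b)*a^(k+1) + b*(a^(k+1)-b^(k+1)) := by ring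
    have h4 : a * (((k:ℝ)+1)*(a-b)*a^k) = ((k:ℝ)+1)*(a-b)*a^(k+1) := by ring
    have h5 : ((k:ℝ)+1+1)*(a-b)*a^(k+1) = (a-b)*a^(k+1) + ((k:ℝ)+1)*(a-b)*a^(k+1) := by ring
    push_cast
    linarith


lemma real_est (ν : ℕ) (R r s X : ℝ) (hR : 1 ≤ R) (hX0 : 0 ≤ X) (hX : X ≤ R)
    (hb : 2*R ≤ r) (hsr : |s - r| ≤ X) :
    (s^(ν+1))⁻¹ * X + |(s^(ν+1))⁻¹ - (r^(ν+1))⁻¹| * r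
      ≤ (2*((ν:ℝ)+1)*R*3^(ν+1)) * (r^(ν+1))⁻¹ := by
  have hrpos : 0 < r := by linarith
  obtain ⟨hsr1, hsr2⟩ := abs_le.1 hsr
  have hs_lb : r/2 ≤ s := by linarith
  have hs_ub : s ≤ 3*r/2 := by linarith
  have hspos : 0 < s := by linarith
  have hsn : s^(ν+1) ≠ 0 := by positivity
  have hrn : r^(ν+1) ≠ 0 := by positivity
  -- inverse bound
  have hinv : (s^(ν+1))⁻¹ ≤ 2^(ν+1) * (r^(ν+1))⁻¹ := by
    have h1 : (r/2)^(ν+1) ≤ s^(ν+1) := pow_le_pow_left₀ (by positivity) hs_lb _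
    have h2 : ((r/2)^(ν+1))⁻¹ = 2^(ν+1) * (r^(ν+1))⁻¹ := by
      rw [div_pow, inv_div, div_eq_mul_inv]
    rw [← h2]
    exact inv_anti₀ (by positivity) h1
  -- |r^n - s^n| bound
  have habs : |r^(ν+1) - s^(ν+1)| ≤ ((ν:ℝ)+1) * R * (3*r/2)^ν := by
    rcases le_total s r with h | h
    · rw [abs_of_nonneg (by nlinarith [pow_le_pow_left₀ hspos.le h (ν+1)])]
      refine (my_pow_sub_pow_le ν hspos.le h).trans ?_
      have hp1 : r^ν ≤ (3*r/2)^ν := pow_le_pow_left₀ hrpos.le (by linarith) ν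
      have hrs : r - s ≤ R := by linarith
      have h6 : (0:ℝ) ≤ (ν:ℝ)+1 := by positivity
      have h7 : (0:ℝ) ≤ r^ν := by positivity
      have h9 : (r - s) * r^ν ≤ R * (3*r/2)^ν :=
        mul_le_mul hrs hp1 h7 (by linarith)
      have h10 := mul_le_mul_of_nonneg_left h9 h6
      nlinarith [h10]
    · rw [abs_of_nonpos (by nlinarith [pow_le_pow_left₀ hrpos.le h (ν+1)]), neg_sub]
      refine (my_pow_sub_pow_le ν hrpos.le h).trans ?_
      have hp1 : s^ν ≤ (3*r/2)^ν := pow_le_pow_left₀ hspos.le (by linarith) ν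
      have hrs : s - r ≤ R := by linarith
      have h6 : (0:ℝ) ≤ (ν:ℝ)+1 := by positivity
      have h7 : (0:ℝ) ≤ s^ν := by positivity
      have h9 : (s - r) * s^ν ≤ R * (3*r/2)^ν :=
        mul_le_mul hrs hp1 h7 (by linarith)
      have h10 := mul_le_mul_of_nonneg_left h9 h6
      nlinarith [h10]
  -- second term
  have heq2 : |(s^(ν+1))⁻¹ - (r^(ν+1))⁻¹|
      = |r^(ν+1) - s^(ν+1)| * ((s^(ν+1))⁻¹ * (r^(ν+1))⁻¹) := by
    rw [inv_sub_inv hsn hrn, abs_div, abs_of_pos (by positivity : (0:ℝ) < s^(ν+1) * r^(ν+1)),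
      div_eq_mul_inv, mul_inv]
  have hterm2 : |(s^(ν+1))⁻¹ - (r^(ν+1))⁻¹| * r ≤ 2*((ν:ℝ)+1)*R*3^ν * (r^(ν+1))⁻¹ := by
    rw [heq2]
    have step : |r^(ν+1) - s^(ν+1)| * ((s^(ν+1))⁻¹ * (r^(ν+1))⁻¹) * r
        ≤ (((ν:ℝ)+1) * R * (3*r/2)^ν) * ((2^(ν+1) * (r^(ν+1))⁻¹) * (r^(ν+1))⁻¹) * r := by
      have h1 : |r^(ν+1) - s^(ν+1)| * ((s^(ν+1))⁻¹ * (r^(ν+1))⁻¹)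
          ≤ (((ν:ℝ)+1) * R * (3*r/2)^ν) * ((2^(ν+1) * (r^(ν+1))⁻¹) * (r^(ν+1))⁻¹) := by
        apply mul_le_mul habs _ (by positivity) (by positivity)
        exact mul_le_mul_of_nonneg_right hinv (by positivity)
      exact mul_le_mul_of_nonneg_right h1 hrpos.le
    refine step.trans (le_of_eq ?_)
    field_simp
    have h32 : ((3:ℝ)/2)^ν * 2^ν = 3^ν := by rw [← mul_pow]; norm_num
    linear_combination (r * r^ν * 2) * h32
  have hterm1 : (s^(ν+1))⁻¹ * X ≤ 2^(ν+1) * (r^(ν+1))⁻¹ * R :=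
    mul_le_mul hinv hX hX0 (by positivity)
  have hcoef : (2:ℝ)^(ν+1) * R + 2*((ν:ℝ)+1)*R*3^ν ≤ 2*((ν:ℝ)+1)*R*3^(ν+1) := by
    have h1 : (2:ℝ)^(ν+1) ≤ 3^(ν+1) := pow_le_pow_left₀ (by norm_num) (by norm_num) _
    have h2 : (3:ℝ)^(ν+1) = 3*3^ν := by rw [pow_succ]; ring
    have h3 : (1:ℝ) ≤ (ν:ℝ)+1 := by
      have := Nat.cast_nonneg (α := ℝ) ν; linarith
    have h4 : (0:ℝ) ≤ (3:ℝ)^ν := by positivity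
    have hRnn : (0:ℝ) ≤ R := by linarith
    rw [h2]
    have h1' : (2:ℝ)^(ν+1) ≤ 3*3^ν := by rw [← h2]; exact h1
    have hA := mul_le_mul_of_nonneg_right h1' hRnn
    have hB := mul_le_mul_of_nonneg_right h3 (mul_nonneg h4 hRnn)
    nlinarith [hA, hB]
  have hfin := mul_le_mul_of_nonneg_right hcoef (by positivity : (0:ℝ) ≤ (r^(ν+1))⁻¹)
  nlinarith [hterm1, hterm2, hfin]

lemma latticeVec_coord (n p : ℕ) (hp : p ≤ n) (m : Fin p → ℤ) (i : Fin p) :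
    latticeVec n p hp m (Fin.castLE hp i) = (m i : ℝ) := by
  simp only [latticeVec]
  rw [WithLp.ofLp_sum, Finset.sum_apply]
  rw [Finset.sum_eq_single i]
  · simp
  · intro j _ hj
    have hne : Fin.castLE hp i ≠ Fin.castLE hp j :=
      fun h => hj (Fin.castLE_injective hp h.symm)
    show (m j : ℝ) * EuclideanSpace.single (Fin.castLE hp j) (1:ℝ) (Fin.castLE hp i) = 0
    rw [EuclideanSpace.single_apply, if_neg hne, mul_zero]
  · simp

lemma coord_le_norm {N : ℕ} (x : EuclideanSpace ℝ (Fin N)) (j : Fin N) : |x j| ≤ ‖x‖ := by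
  rw [EuclideanSpace.norm_eq, ← Real.sqrt_sq_eq_abs]
  apply Real.sqrt_le_sqrt
  have h := Finset.single_le_sum (f := fun i => ‖x i‖^2)
    (fun i _ => by positivity) (Finset.mem_univ j)
  simpa [Real.norm_eq_abs, sq_abs] using h

lemma natAbs_sup_le_norm_latticeVec (n p : ℕ) (hp : p ≤ n) (hp1 : 1 ≤ p) (m : Fin p → ℤ) :
    ((Finset.univ.sup fun i => (m i).natAbs : ℕ) : ℝ) ≤ ‖latticeVec n p hp m‖ := by
  have : NeZero p := ⟨by omega⟩
  have hne : (Finset.univ : Finset (Fin p)).Nonempty := ⟨⟨0, by omega⟩, Finset.mem_univ _⟩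
  obtain ⟨i, _, hi⟩ := Finset.exists_mem_eq_sup Finset.univ hne (fun i => (m i).natAbs)
  rw [hi]
  calc ((m i).natAbs : ℝ) = |((m i : ℤ) : ℝ)| := by
        push_cast [Nat.cast_natAbs]; ring
    _ = |latticeVec n p hp m (Fin.castLE hp i)| := by rw [latticeVec_coord]
    _ ≤ ‖latticeVec n p hp m‖ := coord_le_norm _ _

lemma summable_lattice_pow (q : ℕ) :
    Summable fun m : Fin (q+1) → ℤ =>
      (1:ℝ) / ((max 1 (Finset.univ.sup fun i => (m i).natAbs) : ℕ) : ℝ) ^ (q + 2) := by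
  set p := q + 1 with hp
  set Nm : (Fin p → ℤ) → ℕ := fun m => Finset.univ.sup fun i => (m i).natAbs with hNm
  set f : (Fin p → ℤ) → ℝ := fun m => (1:ℝ) / ((max 1 (Nm m) : ℕ) : ℝ) ^ (q+2) with hf
  have hfnn : ∀ m, 0 ≤ f m := fun m => by positivity
  have hT : Summable (fun k : ℕ => (1:ℝ)/(k:ℝ)^2) := Real.summable_one_div_nat_pow.mpr one_lt_two
  set T : ℝ := ∑' k : ℕ, (1:ℝ)/(k:ℝ)^2 with hTdef
  have hTnn : 0 ≤ T := tsum_nonneg (fun k => by positivity)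
  set C0 : ℝ := 2*(q+1)*3^(q+1) with hC0
  have hC0nn : 0 ≤ C0 := by positivity
  apply summable_of_sum_le (c := 1 + C0 * T) hfnn
  intro u
  set Ball : ℕ → Finset (Fin p → ℤ) := fun M => Finset.Icc (fun _ => -(M:ℤ)) (fun _ => (M:ℤ)) with hBall
  have hmem : ∀ (M : ℕ) (m : Fin p → ℤ), m ∈ Ball M ↔ Nm m ≤ M := by
    intro M m
    simp only [hBall, Finset.mem_Icc, Pi.le_def, hNm, Finset.sup_le_iff, Finset.mem_univ,
      true_implies]
    constructor
    · rintro ⟨h1, h2⟩ i; have := h1 i; have := h2 i; omega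
    · intro h; constructor <;> intro i <;> have := h i <;> omega
  have hcard : ∀ M : ℕ, (Ball M).card = (2*M+1)^p := by
    intro M
    rw [hBall, Pi.card_Icc]
    have h1 : #(Finset.Icc (-(M:ℤ)) (M:ℤ)) = 2*M+1 := by
      rw [Int.card_Icc]; omega
    simp [h1]
  set N := u.sup Nm with hN
  have husub : u ⊆ Ball N := fun m hm => (hmem N m).2 (Finset.le_sup hm)
  refine le_trans (Finset.sum_le_sum_of_subset_of_nonneg husub (fun m _ _ => hfnn m)) ?_
  rw [← Finset.sum_fiberwise_of_maps_to (t := Finset.range (N+1)) (g := Nm)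
      (fun m hm => Finset.mem_range.2 (Nat.lt_succ_of_le ((hmem N m).1 hm))) f]
  have hterm : ∀ k ∈ Finset.range (N+1),
      (∑ m ∈ (Ball N).filter (fun m => Nm m = k), f m)
        ≤ (if k = 0 then (1:ℝ) else 0) + C0 * ((1:ℝ)/(k:ℝ)^2) := by
    intro k _
    have hconst : ∀ m ∈ (Ball N).filter (fun m => Nm m = k),
        f m ≤ (1:ℝ)/((max 1 k : ℕ) : ℝ)^(q+2) := by
      intro m hm
      rw [Finset.mem_filter] at hm
      rw [hf]
      simp only [hm.2]
      exact le_refl _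
    have hle := Finset.sum_le_card_nsmul _ _ _ hconst
    rw [nsmul_eq_mul] at hle
    refine hle.trans ?_
    rcases Nat.eq_zero_or_pos k with rfl | hk
    · have hsub0 : (Ball N).filter (fun m => Nm m = 0) ⊆ Ball 0 := by
        intro m hm; rw [Finset.mem_filter] at hm; exact (hmem 0 m).2 (le_of_eq hm.2)
      have h1 : ((Ball N).filter (fun m => Nm m = 0)).card ≤ 1 := by
        refine le_trans (Finset.card_le_card hsub0) ?_
        rw [hcard 0]; norm_num
      have h3 : (((Ball N).filter (fun m => Nm m = 0)).card : ℝ) ≤ 1 := by exact_mod_cast h1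
      simp only [if_pos rfl, Nat.cast_zero]
      norm_num
      nlinarith
    · have hk1 : 1 ≤ k := hk
      have hkpos : (0:ℝ) < (k:ℝ) := by exact_mod_cast hk
      have hsubk : (Ball N).filter (fun m => Nm m = k) ⊆ Ball k \ Ball (k-1) := by
        intro m hm; rw [Finset.mem_filter] at hm
        rw [Finset.mem_sdiff]
        refine ⟨(hmem k m).2 (le_of_eq hm.2), fun h => ?_⟩
        have := (hmem (k-1) m).1 h; omega
      have hballsub : Ball (k-1) ⊆ Ball k := fun m hm =>
        (hmem k m).2 (le_trans ((hmem (k-1) m).1 hm) (by omega))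
      have hcardle : ((Ball N).filter (fun m => Nm m = k)).card ≤ (2*k+1)^p - (2*(k-1)+1)^p := by
        refine le_trans (Finset.card_le_card hsubk) ?_
        rw [Finset.card_sdiff_of_subset hballsub, hcard, hcard]
      have hmono : (2*(k-1)+1)^p ≤ (2*k+1)^p := Nat.pow_le_pow_left (by omega) p
      have hcardR : ((((Ball N).filter (fun m => Nm m = k)).card : ℕ) : ℝ)
          ≤ ((2*k+1:ℕ):ℝ)^p - ((2*(k-1)+1:ℕ):ℝ)^p := by
        have h := Nat.cast_le (α := ℝ) |>.2 hcardle
        rwa [Nat.cast_sub hmono, Nat.cast_pow, Nat.cast_pow] at h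
      have hab : ((2*(k-1)+1:ℕ):ℝ) ≤ ((2*k+1:ℕ):ℝ) := by
        push_cast [Nat.cast_sub hk1]; linarith
      have hbnn : (0:ℝ) ≤ ((2*(k-1)+1:ℕ):ℝ) := by positivity
      have hps := my_pow_sub_pow_le q hbnn hab
      have hdiff : ((2*k+1:ℕ):ℝ) - ((2*(k-1)+1:ℕ):ℝ) = 2 := by
        push_cast [Nat.cast_sub hk1]; ring
      have hk1R : (1:ℝ) ≤ (k:ℝ) := by exact_mod_cast hk1
      have ha3 : ((2*k+1:ℕ):ℝ) ≤ 3*(k:ℝ) := by push_cast; linarith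
      have ha3q : ((2*k+1:ℕ):ℝ)^q ≤ 3^q * (k:ℝ)^q := by
        calc ((2*k+1:ℕ):ℝ)^q ≤ (3*(k:ℝ))^q := pow_le_pow_left₀ (by positivity) ha3 q
        _ = 3^q * (k:ℝ)^q := mul_pow _ _ _
      have hcardC : ((((Ball N).filter (fun m => Nm m = k)).card : ℕ) : ℝ) ≤ C0 * (k:ℝ)^q := by
        rw [hdiff] at hps
        have h9 : ((q:ℝ)+1) * 2 * ((2*k+1:ℕ):ℝ)^q ≤ ((q:ℝ)+1) * 2 * (3^q * (k:ℝ)^q) := by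
          apply mul_le_mul_of_nonneg_left ha3q (by positivity)
        have h10 : ((q:ℝ)+1) * 2 * (3^q * (k:ℝ)^q) ≤ C0 * (k:ℝ)^q := by
          rw [hC0]
          have h11 : (3:ℝ)^q * (k:ℝ)^q ≤ 3^(q+1) * (k:ℝ)^q := by
            apply mul_le_mul_of_nonneg_right _ (pow_nonneg hkpos.le q)
            exact pow_le_pow_right₀ (by norm_num) (by omega)
          have h12 := mul_le_mul_of_nonneg_left h11
            (show (0:ℝ) ≤ 2*((q:ℝ)+1) by positivity)
          nlinarith [h12]
        calc _ ≤ ((2*k+1:ℕ):ℝ)^p - ((2*(k-1)+1:ℕ):ℝ)^p := hcardR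
        _ ≤ ((q:ℝ)+1) * 2 * ((2*k+1:ℕ):ℝ)^q := by rw [hp]; linarith
        _ ≤ _ := h9.trans h10
      have hmax : (max 1 k : ℕ) = k := max_eq_right hk1
      rw [hmax, if_neg (by omega), zero_add, mul_one_div, mul_one_div,
        div_le_div_iff₀ (by positivity) (by positivity)]
      have hpow : (k:ℝ)^(q+2) = (k:ℝ)^q * (k:ℝ)^2 := by rw [← pow_add]
      calc ((((Ball N).filter (fun m => Nm m = k)).card : ℕ) : ℝ) * (k:ℝ)^2
          ≤ (C0 * (k:ℝ)^q) * (k:ℝ)^2 := by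
            apply mul_le_mul_of_nonneg_right hcardC (by positivity)
        _ = C0 * (k:ℝ)^(q+2) := by rw [hpow]; ring
  refine le_trans (Finset.sum_le_sum hterm) ?_
  rw [Finset.sum_add_distrib]
  have hA : (∑ k ∈ Finset.range (N+1), if k = 0 then (1:ℝ) else 0) = 1 := by
    rw [Finset.sum_ite_eq' (Finset.range (N+1)) 0 (fun _ => (1:ℝ))]
    simp
  have hB : (∑ k ∈ Finset.range (N+1), C0 * ((1:ℝ)/(k:ℝ)^2)) ≤ C0 * T := by
    rw [← Finset.mul_sum]
    exact mul_le_mul_of_nonneg_left (hT.sum_le_tsum (Finset.range (N+1)) (fun k _ => by positivity)) hC0nn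
  linarith


lemma summable_lattice_pow' (p : ℕ) (hp1 : 1 ≤ p) :
    Summable fun m : Fin p → ℤ =>
      (1:ℝ) / ((max 1 (Finset.univ.sup fun i => (m i).natAbs) : ℕ) : ℝ) ^ (p + 1) := by
  obtain ⟨q, rfl⟩ : ∃ q, p = q + 1 := ⟨p - 1, by omega⟩
  exact summable_lattice_pow q

lemma q0_diff_bound (n : ℕ) (hn : 1 ≤ n) (R : ℝ) (hR : 1 ≤ R)
    (x b : EuclideanSpace ℝ (Fin n)) (hx : ‖x‖ ≤ R) (hb : 2*R ≤ ‖b‖) :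
    ‖q0 n (x + b) - q0 n b‖ ≤ (2*(n:ℝ)*R*3^n) * (‖b‖^n)⁻¹ := by
  obtain ⟨ν, rfl⟩ : ∃ ν, n = ν + 1 := ⟨n - 1, by omega⟩
  have hdec : q0 (ν+1) (x + b) - q0 (ν+1) b
      = (‖x+b‖^(ν+1))⁻¹ • x + ((‖x+b‖^(ν+1))⁻¹ - (‖b‖^(ν+1))⁻¹) • b := by
    simp only [q0]; module
  rw [hdec]
  have h1 : ‖(‖x+b‖^(ν+1))⁻¹ • x + ((‖x+b‖^(ν+1))⁻¹ - (‖b‖^(ν+1))⁻¹) • b‖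
      ≤ (‖x+b‖^(ν+1))⁻¹ * ‖x‖ + |(‖x+b‖^(ν+1))⁻¹ - (‖b‖^(ν+1))⁻¹| * ‖b‖ := by
    refine (norm_add_le _ _).trans ?_
    rw [norm_smul, norm_smul, Real.norm_eq_abs, Real.norm_eq_abs,
      abs_of_nonneg (by positivity)]
  refine h1.trans ?_
  have h2 : |‖x+b‖ - ‖b‖| ≤ ‖x‖ := by
    simpa using abs_norm_sub_norm_le (x+b) b
  have h3 := real_est ν R ‖b‖ ‖x+b‖ ‖x‖ hR (norm_nonneg x) hx hb h2
  refine h3.trans (le_of_eq ?_)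
  push_cast
  ring

/-- Proposition 4: for `n ≥ 2`, the series
`q₀(x) + ∑_{m ∈ ℤ^{n−1} \ {0}} (q₀(x + m) − q₀(m))` converges normally on
`ℝⁿ \ ℤ^{n−1}`: for every compact `K` avoiding the lattice,
`∑_{m ≠ 0} sup_{x ∈ K} ‖q₀(x+m) − q₀(m)‖ < ∞`. -/
theorem q0_lattice_series_normally_convergent_codim_one (n : ℕ) (hn : 2 ≤ n)
    (hpn : n - 1 ≤ n)
    (K : Set (EuclideanSpace ℝ (Fin n))) (hK : IsCompact K)
    (hKlat : ∀ x ∈ K, ∀ m : Fin (n - 1) → ℤ, x ≠ latticeVec n (n - 1) hpn m) :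
    Summable fun m : {m : Fin (n - 1) → ℤ // m ≠ 0} =>
      ⨆ x : K, ‖q0 n ((x : EuclideanSpace ℝ (Fin n)) + latticeVec n (n - 1) hpn m) -
        q0 n (latticeVec n (n - 1) hpn m)‖ := by
  have hp1 : 1 ≤ n - 1 := by omega
  obtain ⟨R₀, hR₀⟩ := hK.isBounded.exists_norm_le
  set R := max R₀ 1 with hRdef
  have hR1 : (1:ℝ) ≤ R := le_max_right _ _
  have hRb : ∀ x ∈ K, ‖x‖ ≤ R := fun x hx => (hR₀ x hx).trans (le_max_left _ _)
  rcases isEmpty_or_nonempty K with hKe | hKne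
  · have heq : (fun m : {m : Fin (n-1) → ℤ // m ≠ 0} =>
        ⨆ x : K, ‖q0 n ((x : EuclideanSpace ℝ (Fin n)) + latticeVec n (n - 1) hpn m) -
          q0 n (latticeVec n (n - 1) hpn m)‖) = fun _ => (0:ℝ) :=
      funext fun m => Real.iSup_of_isEmpty _
    rw [heq]; exact summable_zero
  set Nm : (Fin (n-1) → ℤ) → ℕ := fun m => Finset.univ.sup fun i => (m i).natAbs with hNm
  set M : ℕ := ⌈2*R⌉₊ with hM
  set S : Finset {m : Fin (n-1) → ℤ // m ≠ 0} :=
    (Finset.Icc (fun _ => -(M:ℤ)) (fun _ => (M:ℤ))).subtype _ with hS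
  rw [← Finset.summable_compl_iff S]
  set C : ℝ := 2*(n:ℝ)*R*3^n with hC
  have hCnn : (0:ℝ) ≤ C := by positivity
  have hexp : n - 1 + 1 = n := by omega
  have hsum : Summable fun z : {x : {m : Fin (n-1) → ℤ // m ≠ 0} // x ∉ S} =>
      C * ((1:ℝ) / ((max 1 (Nm z.val.val) : ℕ) : ℝ) ^ n) := by
    have h0 := (summable_lattice_pow' (n-1) hp1).mul_left C
    rw [hexp] at h0
    exact h0.comp_injective (Subtype.val_injective.comp Subtype.val_injective)
  apply Summable.of_nonneg_of_le (fun z => Real.iSup_nonneg fun x => norm_nonneg _) _ hsum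
  rintro ⟨⟨m, hm0⟩, hmS⟩
  have hNm1 : 1 ≤ Nm m := by
    obtain ⟨i, hi⟩ := Function.ne_iff.1 hm0
    have : 1 ≤ (m i).natAbs := by
      simp only [Pi.zero_apply] at hi; omega
    have h4 : (m i).natAbs ≤ Nm m :=
      Finset.le_sup (f := fun j => (m j).natAbs) (Finset.mem_univ i)
    omega
  have hNm1R : (1:ℝ) ≤ (Nm m : ℝ) := by exact_mod_cast hNm1
  have hMlt : M < Nm m := by
    by_contra h
    apply hmS
    rw [hS, Finset.mem_subtype]
    simp only [Finset.mem_Icc, Pi.le_def]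
    push_neg at h
    constructor <;> intro i <;>
      have h5 : (m i).natAbs ≤ M :=
        le_trans (Finset.le_sup (f := fun j => (m j).natAbs) (Finset.mem_univ i)) h <;>
      omega
  have hNmL : ((Nm m : ℕ) : ℝ) ≤ ‖latticeVec n (n-1) hpn m‖ :=
    natAbs_sup_le_norm_latticeVec n (n-1) hpn hp1 m
  have h2R : 2*R ≤ ‖latticeVec n (n-1) hpn m‖ := by
    have h1 : 2*R ≤ (M:ℝ) := Nat.le_ceil _
    have h2 : (M:ℝ) ≤ (Nm m : ℝ) := by exact_mod_cast hMlt.le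
    linarith
  refine Real.iSup_le ?_ (by positivity)
  rintro ⟨x, hxK⟩
  have hx := hRb x hxK
  refine (q0_diff_bound n (by omega) R hR1 x _ hx h2R).trans ?_
  rw [max_eq_right hNm1, one_div]
  apply mul_le_mul_of_nonneg_left _ hCnn
  apply inv_anti₀ (by positivity)
  exact pow_le_pow_left₀ (by positivity) hNmL n
end
end

section
/- Let n ≥ 1 and let m be a natural number. Suppose p : ℝⁿ → Cl_n is differentiable, positively homogeneous of degree m (i.e. p(t·u) = t^m p(u) for all t > 0 and u ∈ ℝⁿ), and left monogenic on ℝⁿ \ {0} (i.e. Dp = 0 there). Then the function u ↦ ι(u) * p(u) satisfies D(ι(u) p(u)) = −(n + 2m) · p(u) for every u ∈ ℝⁿ \ {0}; in the notation of the paper, D u p_{k−1}(u) = (−n − 2k + 2) p_{k−1}(u) for p_{k−1} monogenic homogeneous of degree k−1. -/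
noncomputable section

open scoped BigOperators

/-- The quadratic form `Q(v) = −‖v‖²` on `ℝⁿ` generating the Clifford
algebra `Cl_n`. -/
def Qneg (n : ℕ) : QuadraticForm ℝ (EuclideanSpace ℝ (Fin n)) :=
  -(LinearMap.BilinMap.toQuadraticMap (innerₗ (EuclideanSpace ℝ (Fin n))))

/-- if `p : ℝⁿ → Cl_n` is differentiable, positively homogeneous
of degree `m`, and left monogenic on `ℝⁿ \ {0}`, then
`D(ι(u) p(u)) = −(n + 2m) p(u)` on `ℝⁿ \ {0}`.  Here `Cl_n` is realized as a
normed `ℝ`-algebra `A` via an algebra isomorphism `φ`, and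
`Df(x) = ∑_j ι(e_j) ∂f/∂x_j(x)`. -/
theorem dirac_of_vector_times_monogenic (n m : ℕ) (hn : 1 ≤ n)
    (A : Type*) [NormedRing A] [NormedAlgebra ℝ A]
    (φ : CliffordAlgebra (Qneg n) ≃ₐ[ℝ] A)
    (p : EuclideanSpace ℝ (Fin n) → A)
    (hdiff : Differentiable ℝ p)
    (hhom : ∀ t : ℝ, 0 < t → ∀ u : EuclideanSpace ℝ (Fin n),
      p (t • u) = t ^ m • p u)
    (hmono : ∀ u : EuclideanSpace ℝ (Fin n), u ≠ 0 →
      ∑ j : Fin n, φ (CliffordAlgebra.ι (Qneg n) (EuclideanSpace.single j 1)) *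
        fderiv ℝ p u (EuclideanSpace.single j 1) = 0) :
    ∀ u : EuclideanSpace ℝ (Fin n), u ≠ 0 →
      ∑ j : Fin n, φ (CliffordAlgebra.ι (Qneg n) (EuclideanSpace.single j 1)) *
          fderiv ℝ (fun v => φ (CliffordAlgebra.ι (Qneg n) v) * p v) u
            (EuclideanSpace.single j 1) =
        (-((n : ℝ) + 2 * m)) • p u := by
  classical
  intro u hu
  set ci : EuclideanSpace ℝ (Fin n) → A :=
    fun v => φ (CliffordAlgebra.ι (Qneg n) v) with hci
  set d := fderiv ℝ p u with hd
  -- the linear map v ↦ φ (ι v) as a continuous linear map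
  let L : EuclideanSpace ℝ (Fin n) →L[ℝ] A :=
    LinearMap.toContinuousLinearMap
      (φ.toLinearMap ∘ₗ CliffordAlgebra.ι (Qneg n))
  have hLv : ∀ v, L v = ci v := fun v => rfl
  -- product rule
  have hprod : HasFDerivAt (fun v => ci v * p v)
      (ci u • d + L.smulRight (p u)) u := by
    refine HasFDerivAt.congr_fderiv ((L.hasFDerivAt (x := u)).mul' (hdiff u).hasFDerivAt) ?_
    ext w
    simp [hLv, hd]
  have hfd : ∀ w, fderiv ℝ (fun v => ci v * p v) u w
      = ci u * d w + ci w * p u := by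
    intro w
    rw [hprod.fderiv]
    simp [hLv, smul_eq_mul]
  -- Euler's relation
  have heuler : d u = (m : ℝ) • p u := by
    have hs : HasDerivAt (fun t : ℝ => t • u) u 1 := by
      simpa using (hasDerivAt_id (1 : ℝ)).smul_const u
    have h1 : HasDerivAt (fun t : ℝ => p (t • u)) (d u) 1 := by
      have hfd' : HasFDerivAt p (fderiv ℝ p u) ((fun t : ℝ => t • u) 1) := by
        simpa using (hdiff u).hasFDerivAt
      exact hfd'.comp_hasDerivAt 1 hs
    have h2 : HasDerivAt (fun t : ℝ => t ^ m • p u) ((m : ℝ) • p u) 1 := by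
      simpa using (hasDerivAt_pow m (1 : ℝ)).smul_const (p u)
    have heq : (fun t : ℝ => t ^ m • p u) =ᶠ[nhds (1 : ℝ)]
        fun t : ℝ => p (t • u) := by
      filter_upwards [Ioi_mem_nhds (by norm_num : (0 : ℝ) < 1)] with t ht
      exact (hhom t ht u).symm
    exact (h1.congr_of_eventuallyEq heq).unique h2
  -- decomposition of u
  have hdecomp : u = ∑ j, u j • EuclideanSpace.single j 1 := by
    have := (EuclideanSpace.basisFun (Fin n) ℝ).sum_repr u
    simpa [EuclideanSpace.basisFun_apply, EuclideanSpace.basisFun_repr]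
      using this.symm
  have hdu : d u = ∑ j, u j • d (EuclideanSpace.single j 1) := by
    conv_lhs => rw [hdecomp]
    simp [map_sum]
  -- Clifford algebra relations
  have hsq : ∀ j : Fin n, ci (EuclideanSpace.single j 1) *
      ci (EuclideanSpace.single j 1) = -1 := by
    intro j
    have hQ : Qneg n (EuclideanSpace.single j 1) = -1 := by
      simp [Qneg, LinearMap.BilinMap.toQuadraticMap_apply, EuclideanSpace.inner_single_right,
        EuclideanSpace.inner_single_left,
        EuclideanSpace.single_apply]
    rw [hci, ← map_mul, CliffordAlgebra.ι_sq_scalar, hQ]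
    simp
  have hcomm : ∀ j : Fin n, ci (EuclideanSpace.single j 1) * ci u =
      (-(2 * u j)) • (1 : A) - ci u * ci (EuclideanSpace.single j 1) := by
    intro j
    have hP : QuadraticMap.polar (Qneg n) (EuclideanSpace.single j 1) u
        = -(2 * u j) := by
      simp [Qneg, QuadraticMap.polar_neg, LinearMap.BilinMap.polar_toQuadraticMap,
        EuclideanSpace.inner_single_right, EuclideanSpace.inner_single_left,
        real_inner_comm]
      ring
    rw [hci, ← map_mul, CliffordAlgebra.ι_mul_ι_comm, hP]
    simp [Algebra.algebraMap_eq_smul_one, sub_eq_add_neg]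
  -- main computation
  have hmain : ∑ j : Fin n, ci (EuclideanSpace.single j 1) *
      fderiv ℝ (fun v => ci v * p v) u (EuclideanSpace.single j 1) =
      (-((n : ℝ) + 2 * m)) • p u := by
    have hterm : ∀ j : Fin n, ci (EuclideanSpace.single j 1) *
        fderiv ℝ (fun v => ci v * p v) u (EuclideanSpace.single j 1)
        = ((-(2 * u j)) • d (EuclideanSpace.single j 1)
            - ci u * (ci (EuclideanSpace.single j 1) * d (EuclideanSpace.single j 1)))
          + (- p u) := by
      intro j
      rw [hfd, mul_add, ← mul_assoc, ← mul_assoc, hsq, hcomm]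
      simp [sub_mul, smul_mul_assoc, mul_assoc]
    rw [Finset.sum_congr rfl fun j _ => hterm j]
    rw [Finset.sum_add_distrib, Finset.sum_sub_distrib, ← Finset.mul_sum,
      hmono u hu, mul_zero, sub_zero, Finset.sum_const, Finset.card_univ,
      Fintype.card_fin]
    have : ∑ j : Fin n, (-(2 * u j)) • d (EuclideanSpace.single j 1)
        = (-(2 * (m : ℝ))) • p u := by
      have : ∑ j : Fin n, (-(2 * u j)) • d (EuclideanSpace.single j 1)
          = (-2 : ℝ) • ∑ j, u j • d (EuclideanSpace.single j 1) := by
        rw [Finset.smul_sum]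
        exact Finset.sum_congr rfl fun j _ => by rw [smul_smul]; ring_nf
      rw [this, ← hdu, heuler, smul_smul]
      ring_nf
    rw [this]
    rw [← Nat.cast_smul_eq_nsmul ℝ]
    rw [smul_neg, ← neg_smul, ← add_smul]
    ring_nf
  exact hmain
end
end

section
/- Let n ≥ 2 and define G : ℝⁿ \ {0} → Cl_n by G(x) = ‖x‖^{−n} · ι(x) (the Cauchy kernel, up to a constant, of the Dirac operator). Then G is left monogenic on ℝⁿ \ {0}: for every x ∈ ℝⁿ \ {0}, ∑_{j=1}^n ι(e_j) * ∂G/∂x_j(x) = 0. -/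
noncomputable section

open scoped BigOperators

lemma Qneg_apply (n : ℕ) (v : EuclideanSpace ℝ (Fin n)) :
    Qneg n v = -(‖v‖ ^ 2) := by
  simp only [Qneg, QuadraticMap.neg_apply, LinearMap.BilinMap.toQuadraticMap_apply]
  rw [innerₗ_apply_apply, real_inner_self_eq_norm_sq]

lemma euclidean_sum_single {n : ℕ} (x : EuclideanSpace ℝ (Fin n)) :
    ∑ j : Fin n, x j • EuclideanSpace.single j (1 : ℝ) = x := by
  ext i
  rw [show (∑ j : Fin n, x j • EuclideanSpace.single j (1 : ℝ)) i
      = ∑ j : Fin n, (x j • EuclideanSpace.single j (1 : ℝ)) i from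
    by rw [WithLp.ofLp_sum, Finset.sum_apply]]
  simp [EuclideanSpace.single_apply, mul_comm]

set_option maxHeartbeats 1000000 in
/-- the Cauchy kernel `G(x) = ‖x‖^{−n} ι(x)` is left monogenic
on `ℝⁿ \ {0}`: `∑_j ι(e_j) ∂G/∂x_j(x) = 0` for `x ≠ 0`.  Here `Cl_n` is
realized as a normed `ℝ`-algebra `A` via an algebra isomorphism `φ`. -/
theorem cauchy_kernel_left_monogenic (n : ℕ) (hn : 2 ≤ n)
    (A : Type*) [NormedRing A] [NormedAlgebra ℝ A]
    (φ : CliffordAlgebra (Qneg n) ≃ₐ[ℝ] A)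
    (G : EuclideanSpace ℝ (Fin n) → A)
    (hG : ∀ x, G x = (‖x‖ ^ n)⁻¹ • φ (CliffordAlgebra.ι (Qneg n) x)) :
    ∀ x : EuclideanSpace ℝ (Fin n), x ≠ 0 →
      ∑ j : Fin n, φ (CliffordAlgebra.ι (Qneg n) (EuclideanSpace.single j 1)) *
        fderiv ℝ G x (EuclideanSpace.single j 1) = 0 := by
  intro x hx
  have hxn : ‖x‖ ≠ 0 := norm_ne_zero_iff.mpr hx
  have hr2 : (0 : ℝ) < ‖x‖ ^ 2 := by positivity
  set p : ℝ := -(n : ℝ) / 2 with hp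
  -- the continuous linear map `v ↦ φ (ι v)`
  set ℓ : EuclideanSpace ℝ (Fin n) →L[ℝ] A :=
    LinearMap.toContinuousLinearMap
      ((AlgEquiv.toLinearMap φ) ∘ₗ (CliffordAlgebra.ι (Qneg n))) with hℓdef
  have hℓ : ∀ v, ℓ v = φ (CliffordAlgebra.ι (Qneg n) v) := fun v => rfl
  -- scalar rewrite
  have hsc : ∀ y : EuclideanSpace ℝ (Fin n), y ≠ 0 →
      ((‖y‖ ^ 2 : ℝ)) ^ p = (‖y‖ ^ n)⁻¹ := by
    intro y hy
    have h0 : (0 : ℝ) ≤ ‖y‖ := norm_nonneg y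
    rw [← Real.rpow_natCast ‖y‖ 2, ← Real.rpow_mul h0, ← Real.rpow_natCast ‖y‖ n,
      ← Real.rpow_neg h0]
    congr 1
    push_cast [hp]
    ring
  -- derivative of the scalar part
  have hq : HasFDerivAt (fun y : EuclideanSpace ℝ (Fin n) => ‖y‖ ^ 2)
      (2 • innerSL ℝ x) x := (hasStrictFDerivAt_norm_sq x).hasFDerivAt
  have hrpow : HasDerivAt (fun t : ℝ => t ^ p) (p * (‖x‖ ^ 2) ^ (p - 1)) (‖x‖ ^ 2) :=
    Real.hasDerivAt_rpow_const (Or.inl (ne_of_gt hr2))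
  have hscal : HasFDerivAt (fun y : EuclideanSpace ℝ (Fin n) => (‖y‖ ^ 2 : ℝ) ^ p)
      ((p * (‖x‖ ^ 2) ^ (p - 1)) • (2 • innerSL ℝ x)) x :=
    by have := hrpow.comp_hasFDerivAt x hq; exact this
  have hH : HasFDerivAt (fun y : EuclideanSpace ℝ (Fin n) => ((‖y‖ ^ 2 : ℝ) ^ p) • ℓ y)
      (((‖x‖ ^ 2 : ℝ) ^ p) • ℓ +
        ((p * (‖x‖ ^ 2) ^ (p - 1)) • (2 • innerSL ℝ x)).smulRight (ℓ x)) x :=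
    hscal.smul (ℓ.hasFDerivAt)
  -- G agrees with H near x
  have heq : G =ᶠ[nhds x] (fun y : EuclideanSpace ℝ (Fin n) => ((‖y‖ ^ 2 : ℝ) ^ p) • ℓ y) := by
    filter_upwards [IsOpen.mem_nhds isOpen_compl_singleton
      (by simpa using hx : x ∈ ({0} : Set (EuclideanSpace ℝ (Fin n)))ᶜ)] with y hy
    have hy' : y ≠ 0 := by simpa using hy
    rw [hG y, hsc y hy', hℓ]
  have hfd : fderiv ℝ G x = ((‖x‖ ^ 2 : ℝ) ^ p) • ℓ +
      ((p * (‖x‖ ^ 2) ^ (p - 1)) • (2 • innerSL ℝ x)).smulRight (ℓ x) := by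
    rw [heq.fderiv_eq, hH.fderiv]
  rw [hfd]
  -- abbreviations
  set c1 : ℝ := (‖x‖ ^ 2 : ℝ) ^ p with hc1
  set c2 : ℝ := p * (‖x‖ ^ 2) ^ (p - 1) with hc2
  have happ : ∀ j : Fin n,
      (c1 • ℓ + (c2 • (2 • innerSL ℝ x)).smulRight (ℓ x)) (EuclideanSpace.single j 1)
        = c1 • φ (CliffordAlgebra.ι (Qneg n) (EuclideanSpace.single j 1)) +
          (c2 * (2 * x j)) • φ (CliffordAlgebra.ι (Qneg n) x) := by
    intro j
    have : (inner ℝ x (EuclideanSpace.single j (1:ℝ)) : ℝ) = x j := by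
      rw [EuclideanSpace.inner_single_right]
      simp
    simp [ContinuousLinearMap.add_apply, ContinuousLinearMap.smul_apply,
      ContinuousLinearMap.smulRight_apply, hℓ, this, mul_assoc]
  simp only [happ]
  -- split the sum
  have hsplit : ∀ j : Fin n,
      φ (CliffordAlgebra.ι (Qneg n) (EuclideanSpace.single j 1)) *
        (c1 • φ (CliffordAlgebra.ι (Qneg n) (EuclideanSpace.single j 1)) +
          (c2 * (2 * x j)) • φ (CliffordAlgebra.ι (Qneg n) x))
      = c1 • (φ (CliffordAlgebra.ι (Qneg n) (EuclideanSpace.single j 1)) *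
              φ (CliffordAlgebra.ι (Qneg n) (EuclideanSpace.single j 1))) +
        ((2 * c2) • (x j • φ (CliffordAlgebra.ι (Qneg n) (EuclideanSpace.single j 1)))) *
          φ (CliffordAlgebra.ι (Qneg n) x) := by
    intro j
    rw [mul_add, mul_smul_comm, mul_smul_comm]
    congr 1
    simp only [smul_mul_assoc, smul_smul]
    congr 1
    ring
  simp only [hsplit, Finset.sum_add_distrib, ← Finset.smul_sum, ← Finset.sum_smul,
    ← Finset.sum_mul]
  -- the squares of basis vectors
  have hsq : ∀ v : EuclideanSpace ℝ (Fin n),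
      φ (CliffordAlgebra.ι (Qneg n) v) * φ (CliffordAlgebra.ι (Qneg n) v)
        = (-(‖v‖ ^ 2)) • (1 : A) := by
    intro v
    rw [← map_mul, CliffordAlgebra.ι_sq_scalar, Qneg_apply, AlgEquiv.commutes,
      Algebra.algebraMap_eq_smul_one]
  have hsum1 : ∑ j : Fin n,
      (φ (CliffordAlgebra.ι (Qneg n) (EuclideanSpace.single j 1)) *
        φ (CliffordAlgebra.ι (Qneg n) (EuclideanSpace.single j 1)))
      = (-(n : ℝ)) • (1 : A) := by
    have : ∀ j : Fin n, φ (CliffordAlgebra.ι (Qneg n) (EuclideanSpace.single j 1)) *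
        φ (CliffordAlgebra.ι (Qneg n) (EuclideanSpace.single j 1)) = (-1 : ℝ) • (1 : A) := by
      intro j
      rw [hsq]
      norm_num [EuclideanSpace.norm_single]
    simp [this, Finset.sum_const, ← Nat.cast_smul_eq_nsmul (R := ℝ), smul_smul]
  have hsum2 : ∑ j : Fin n, x j • φ (CliffordAlgebra.ι (Qneg n) (EuclideanSpace.single j 1))
      = φ (CliffordAlgebra.ι (Qneg n) x) := by
    have := euclidean_sum_single x
    calc ∑ j : Fin n, x j • φ (CliffordAlgebra.ι (Qneg n) (EuclideanSpace.single j 1))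
        = φ (CliffordAlgebra.ι (Qneg n) (∑ j : Fin n, x j • EuclideanSpace.single j (1:ℝ))) := by
          simp [map_sum, map_smul]
      _ = φ (CliffordAlgebra.ι (Qneg n) x) := by rw [this]
  rw [hsum1, hsum2, smul_mul_assoc, hsq, smul_smul, smul_smul, ← add_smul]
  have hpow : (‖x‖ ^ 2 : ℝ) ^ (p - 1) * ‖x‖ ^ 2 = (‖x‖ ^ 2 : ℝ) ^ p := by
    rw [show ((‖x‖ ^ 2 : ℝ) ^ (p - 1) * ‖x‖ ^ 2)
        = (‖x‖ ^ 2 : ℝ) ^ (p - 1) * (‖x‖ ^ 2 : ℝ) ^ (1 : ℝ) by rw [Real.rpow_one],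
      ← Real.rpow_add hr2]
    norm_num
  convert zero_smul ℝ (1 : A) using 2
  rw [hc1, hc2, hp]
  linear_combination (n : ℝ) * hpow
end
end
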